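/- Let G, H be closed subspaces of a Hilbert space and F an element of the space. With the iterates Fⁿ = Fⁿ_G + Fⁿ_H of the iterative model combination algorithm (F⁰_H = P_H(F), Fⁿ_G = P_G(F − Fⁿ_H), F^{n+1}_H = P_H(F − Fⁿ_G)), one has lim_{n→∞} ‖P_{G⊕H}(F) − Fⁿ‖ = 0, where G⊕H = closure of {g + h : g ∈ G, h ∈ H} (assumed closed). -/

import Mathlib

open scoped RealInnerProductSpace
open Filter

noncomputable def proj {E : Type*} [NormedAddCommGroup E] [InnerProductSpace ℝ E]
    (K : Submodule ℝ E) [CompleteSpace K] : E →L[ℝ] E :=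
  K.subtypeL.comp (K.orthogonalProjectionOnto)

section lemmas
variable {E : Type*} [NormedAddCommGroup E] [InnerProductSpace ℝ E]
  (K : Submodule ℝ E) [CompleteSpace K]

lemma proj_mem (x : E) : proj K x ∈ K := (K.orthogonalProjectionOnto x).2

lemma proj_of_mem {x : E} (hx : x ∈ K) : proj K x = x := by
  exact (Submodule.starProjection_eq_self_iff (K := K)).2 hx

lemma proj_proj (x : E) : proj K (proj K x) = proj K x :=
  proj_of_mem K (proj_mem K x)

lemma proj_inner (x y : E) : ⟪proj K x, y⟫ = ⟪x, proj K y⟫ :=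
  Submodule.inner_starProjection_left_eq_right K x y

lemma sub_proj_mem (x : E) : x - proj K x ∈ Kᗮ :=
  Submodule.sub_starProjection_mem_orthogonal (K := K) x

lemma proj_inner_self (x : E) : ⟪proj K x, x⟫ = ‖proj K x‖ ^ 2 := by
  have : ⟪proj K x, x - proj K x⟫ = 0 := (sub_proj_mem K x) _ (proj_mem K x)
  have h2 := inner_sub_right (𝕜 := ℝ) (proj K x) x (proj K x)
  rw [this] at h2
  rw [← sub_eq_zero, ← real_inner_self_eq_norm_sq]
  linarith [h2]

lemma proj_norm_sq (x : E) : ‖x‖ ^ 2 = ‖proj K x‖ ^ 2 + ‖x - proj K x‖ ^ 2 := by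
  have h : ⟪proj K x, x - proj K x⟫ = 0 := (sub_proj_mem K x) _ (proj_mem K x)
  have := norm_add_sq_real (proj K x) (x - proj K x)
  simpa [h] using this

lemma proj_norm_le (x : E) : ‖proj K x‖ ≤ ‖x‖ := by
  have h := proj_norm_sq K x
  nlinarith [norm_nonneg (x - proj K x), norm_nonneg (proj K x), norm_nonneg x]

lemma proj_eq_self_of_norm_eq {x : E} (h : ‖proj K x‖ = ‖x‖) : proj K x = x := by
  have h2 := proj_norm_sq K x
  rw [h] at h2
  have : ‖x - proj K x‖ = 0 := by nlinarith [norm_nonneg (x - proj K x)]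
  have := norm_eq_zero.1 this
  linear_combination (norm := module) -this

lemma proj_orthogonal [CompleteSpace E] (x : E) : proj Kᗮ x = x - proj K x := by
  exact Submodule.starProjection_orthogonal_val (K := K) x

end lemmas

section vonneumann
variable {E : Type*} [NormedAddCommGroup E] [InnerProductSpace ℝ E] [CompleteSpace E]
  (A B : Submodule ℝ E) [CompleteSpace A] [CompleteSpace B] [CompleteSpace ↥(A ⊓ B)]

lemma vonNeumann_S (x : E) :
    Tendsto (fun n => ((proj B * proj A * proj B : E →L[ℝ] E) ^ n) x)
      atTop (nhds (proj (A ⊓ B) x)) := by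
  set pA := proj A with hpA
  set pB := proj B with hpB
  set S : E →L[ℝ] E := pB * pA * pB with hS
  have hSapp : ∀ v : E, S v = pB (pA (pB v)) := fun v => rfl
  -- self-adjointness
  have hadj : ∀ u v : E, ⟪S u, v⟫ = ⟪u, S v⟫ := by
    intro u v
    rw [hSapp, hSapp, proj_inner B, proj_inner A, proj_inner B]
  have hpow : ∀ (k : ℕ) (u v : E), ⟪(S ^ k) u, v⟫ = ⟪u, (S ^ k) v⟫ := by
    intro k
    induction k with
    | zero => intro u v; simp
    | succ n ih =>
      intro u v
      have h1 : ∀ w : E, (S ^ (n + 1)) w = (S ^ n) (S w) := by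
        intro w; rw [pow_succ]; rfl
      have h2 : ∀ w : E, (S ^ (n + 1)) w = S ((S ^ n) w) := by
        intro w; rw [pow_succ']; rfl
      rw [h1, ih, hadj, ← h2]
  -- quantitative facts
  have hSinner : ∀ v : E, ⟪S v, v⟫ = ‖pA (pB v)‖ ^ 2 := by
    intro v
    rw [hSapp, proj_inner B, hpB, proj_inner_self A (proj B v)]
  have hSnorm : ∀ v : E, ‖S v‖ ^ 2 ≤ ⟪S v, v⟫ := by
    intro v
    rw [hSinner, hSapp]
    have := proj_norm_le B (pA (pB v))
    have h0 : (0:ℝ) ≤ ‖pB (pA (pB v))‖ := norm_nonneg _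
    nlinarith
  have hScontr : ∀ v : E, ⟪S v, v⟫ ≤ ‖v‖ ^ 2 := by
    intro v
    rw [hSinner]
    have h1 := proj_norm_le A (pB v)
    have h2 := proj_norm_le B v
    have h0 : (0:ℝ) ≤ ‖pA (pB v)‖ := norm_nonneg _
    nlinarith
  set u : ℕ → E := fun n => (S ^ n) x with hu
  set b : ℕ → ℝ := fun k => ⟪(S ^ k) x, x⟫ with hb
  have hb_add : ∀ i j : ℕ, ⟪u i, u j⟫ = b (i + j) := by
    intro i j
    rw [hu, hb]
    simp only
    rw [hpow i, ← ContinuousLinearMap.comp_apply, ← ContinuousLinearMap.mul_def, ← pow_add, real_inner_comm]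
  have hb_even : ∀ j : ℕ, b (2 * j) = ‖u j‖ ^ 2 := by
    intro j
    rw [two_mul, ← hb_add, real_inner_self_eq_norm_sq]
  have hb_odd : ∀ j : ℕ, b (2 * j + 1) = ⟪S (u j), u j⟫ := by
    intro j
    have : 2 * j + 1 = (j + 1) + j := by ring
    rw [this, ← hb_add]
    congr 1
    rw [hu]; simp only
    rw [pow_succ']; rfl
  have hb_nonneg : ∀ k, 0 ≤ b k := by
    intro k
    rcases Nat.even_or_odd k with ⟨j, hj⟩ | ⟨j, hj⟩
    · rw [hj, ← two_mul, hb_even]; positivity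
    · rw [hj, hb_odd]
      exact le_trans (by positivity) (hSnorm (u j))
  have hb_anti : Antitone b := by
    apply antitone_nat_of_succ_le
    intro k
    rcases Nat.even_or_odd k with ⟨j, hj⟩ | ⟨j, hj⟩
    · rw [hj, ← two_mul, hb_even, hb_odd]
      exact hScontr (u j)
    · rw [hj, hb_odd]
      have : 2 * j + 1 + 1 = 2 * (j + 1) := by ring
      rw [this, hb_even]
      have hji : u (j + 1) = S (u j) := by
        rw [hu]; simp only; rw [pow_succ']; rfl
      rw [hji]
      exact hSnorm (u j)
  have hbdd : BddBelow (Set.range b) := ⟨0, by rintro r ⟨k, rfl⟩; exact hb_nonneg k⟩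
  set L : ℝ := ⨅ k, b k with hL
  have hbL : Tendsto b atTop (nhds L) := tendsto_atTop_ciInf hb_anti hbdd
  have hLle : ∀ k, L ≤ b k := fun k => ciInf_le hbdd k
  -- Cauchy
  have hcauchy : CauchySeq u := by
    rw [Metric.cauchySeq_iff']
    intro ε hε
    have : ∀ᶠ k in atTop, b k < L + ε ^ 2 :=
      hbL.eventually_lt_const (by nlinarith)
    obtain ⟨N, hN⟩ := this.exists_forall_of_atTop
    refine ⟨N, fun n hn => ?_⟩
    have hsq : ‖u n - u N‖ ^ 2 = b (2 * n) + b (2 * N) - 2 * b (n + N) := by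
      have := norm_sub_sq_real (u n) (u N)
      rw [hb_add n N] at this
      rw [this, ← hb_even, ← hb_even]; ring
    have h1 : b (2 * n) ≤ b (n + N) := hb_anti (by omega)
    have h2 : L ≤ b (n + N) := hLle _
    have h3 : b (2 * N) < L + ε ^ 2 := hN (2 * N) (by omega)
    have h4 : ‖u n - u N‖ ^ 2 < ε ^ 2 := by rw [hsq]; linarith
    have := lt_of_pow_lt_pow_left₀ 2 (le_of_lt hε) h4
    rwa [dist_eq_norm]
  obtain ⟨y, hy⟩ := cauchySeq_tendsto_of_complete hcauchy
  -- the limit is fixed by S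
  have hSy : S y = y := by
    have h1 : Tendsto (fun n => u (n + 1)) atTop (nhds y) :=
      hy.comp (tendsto_add_atTop_nat 1)
    have h2 : Tendsto (fun n => S (u n)) atTop (nhds (S y)) :=
      (S.continuous.tendsto y).comp hy
    have h3 : (fun n => S (u n)) = fun n => u (n + 1) := by
      funext n; rw [hu]; simp only; rw [pow_succ']; rfl
    rw [h3] at h2
    exact tendsto_nhds_unique h2 h1
  have hyB : y ∈ B := by
    rw [← hSy, hSapp]; exact proj_mem B _
  have hpBy : pB y = y := proj_of_mem B hyB
  have hyA : pA y = y := by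
    have h1 : ⟪S y, y⟫ = ‖pA (pB y)‖ ^ 2 := hSinner y
    rw [hSy, hpBy, real_inner_self_eq_norm_sq] at h1
    apply proj_eq_self_of_norm_eq
    have h2 := proj_norm_le A y
    have h0 : (0:ℝ) ≤ ‖pA y‖ := norm_nonneg _
    have h0' : (0:ℝ) ≤ ‖y‖ := norm_nonneg _
    nlinarith
  have hyAB : y ∈ A ⊓ B := ⟨by rw [← hyA]; exact proj_mem A y, hyB⟩
  -- orthogonality
  have horth : ∀ z ∈ A ⊓ B, ⟪x - y, z⟫ = 0 := by
    intro z hz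
    have hzA : pA z = z := proj_of_mem A hz.1
    have hzB : pB z = z := proj_of_mem B hz.2
    have hSz : S z = z := by rw [hSapp, hzB, hzA, hzB]
    have hSnz : ∀ n : ℕ, (S ^ n) z = z := by
      intro n
      induction n with
      | zero => simp
      | succ m ih =>
        have : (S ^ (m + 1)) z = S ((S ^ m) z) := by rw [pow_succ']; rfl
        rw [this, ih, hSz]
    have hinner : ∀ n : ℕ, ⟪u n, z⟫ = ⟪x, z⟫ := by
      intro n
      rw [hu]; simp only
      rw [hpow n, hSnz n]
    have hlim : Tendsto (fun n => ⟪u n, z⟫) atTop (nhds ⟪y, z⟫) :=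
      hy.inner tendsto_const_nhds
    simp only [hinner] at hlim
    have := tendsto_nhds_unique hlim tendsto_const_nhds
    rw [inner_sub_left, this]; ring
  have hproj : proj (A ⊓ B) x = y := by
    have := Submodule.eq_starProjection_of_mem_of_inner_eq_zero (K := A ⊓ B) hyAB
      (fun w hw => horth w hw)
    exact this
  rw [hproj]
  exact hy

end vonneumann

section cor
variable {E : Type*} [NormedAddCommGroup E] [InnerProductSpace ℝ E] [CompleteSpace E]
  (A B : Submodule ℝ E) [CompleteSpace A] [CompleteSpace B] [CompleteSpace ↥(A ⊓ B)]

lemma vonNeumann_T (x : E) :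
    Tendsto (fun n => ((proj A * proj B : E →L[ℝ] E) ^ (n + 1)) x)
      atTop (nhds (proj (A ⊓ B) x)) := by
  set pA := proj A
  set pB := proj B
  set S : E →L[ℝ] E := pB * pA * pB with hS
  set w : ℕ → E := fun n => (S ^ n) (pB x) with hw
  have hwlim : Tendsto w atTop (nhds (proj (A ⊓ B) (pB x))) := vonNeumann_S A B (pB x)
  have heq : proj (A ⊓ B) (pB x) = proj (A ⊓ B) x := by
    have hmem : x - pB x ∈ (A ⊓ B)ᗮ := by
      have h1 : x - pB x ∈ Bᗮ := sub_proj_mem B x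
      exact Submodule.orthogonal_le inf_le_right h1
    have h2 : proj (A ⊓ B) (x - pB x) = 0 := by
      exact congrArg Subtype.val (Submodule.orthogonalProjectionOnto_apply_of_mem_orthogonal hmem)
    have h3 := map_sub (proj (A ⊓ B)) x (pB x)
    rw [h2] at h3
    exact (sub_eq_zero.mp h3.symm).symm
  rw [heq] at hwlim
  have hwB : ∀ n, pB (w n) = w n := by
    intro n
    apply proj_of_mem
    cases n with
    | zero => exact proj_mem B x
    | succ m =>
      have : w (m + 1) = S ((S ^ m) (pB x)) := by rw [hw]; simp only; rw [pow_succ']; rfl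
      rw [this]
      exact proj_mem B _
  have hTw : ∀ n, ((pA * pB : E →L[ℝ] E) ^ (n + 1)) x = pA (w n) := by
    intro n
    induction n with
    | zero => simp [hw]
    | succ m ih =>
      have h1 : ((pA * pB : E →L[ℝ] E) ^ (m + 2)) x
          = (pA * pB) (((pA * pB : E →L[ℝ] E) ^ (m + 1)) x) := by rw [pow_succ']; rfl
      have h2 : w (m + 1) = S (w m) := by rw [hw]; simp only; rw [pow_succ']; rfl
      rw [h1, ih]
      show pA (pB (pA (w m))) = pA (w (m + 1))
      rw [h2]
      congr 1
      show pB (pA (w m)) = pB (pA (pB (w m)))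
      rw [hwB m]
  have hfix : pA (proj (A ⊓ B) x) = proj (A ⊓ B) x :=
    proj_of_mem A (proj_mem (A ⊓ B) x).1
  have hlim2 : Tendsto (fun n => pA (w n)) atTop (nhds (proj (A ⊓ B) x)) := by
    have := (pA.continuous.tendsto _).comp hwlim
    rwa [hfix] at this
  simpa only [hTw] using hlim2

end cor

lemma proj_congr {E : Type*} [NormedAddCommGroup E] [InnerProductSpace ℝ E]
    {K K' : Submodule ℝ E} [CompleteSpace K] [CompleteSpace K'] (h : K = K') (x : E) :
    proj K x = proj K' x := by subst h; rfl

theorem stmt6 {E : Type*} [NormedAddCommGroup E] [InnerProductSpace ℝ E] [CompleteSpace E]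
    (G H : Submodule ℝ E) [CompleteSpace G] [CompleteSpace H] [CompleteSpace ↥(G ⊔ H)]
    (F : E) (FG FH : ℕ → E)
    (hFH0 : FH 0 = proj H F)
    (hFG : ∀ n : ℕ, FG n = proj G (F - FH n))
    (hFH : ∀ n : ℕ, FH (n + 1) = proj H (F - FG n)) :
    Filter.Tendsto (fun n => ‖proj (G ⊔ H) F - (FG n + FH n)‖) Filter.atTop (nhds 0) := by
  haveI : CompleteSpace ↥Gᗮ := G.isClosed_orthogonal.completeSpace_coe
  haveI : CompleteSpace ↥Hᗮ := H.isClosed_orthogonal.completeSpace_coe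
  haveI : CompleteSpace ↥(Gᗮ ⊓ Hᗮ) := by
    rw [Submodule.inf_orthogonal]
    exact (G ⊔ H).isClosed_orthogonal.completeSpace_coe
  set T : E →L[ℝ] E := proj Gᗮ * proj Hᗮ with hT
  have hFHmem : ∀ n, FH n ∈ H := by
    intro n
    cases n with
    | zero => rw [hFH0]; exact proj_mem H F
    | succ m => rw [hFH m]; exact proj_mem H _
  have hFGmem : ∀ n, FG n ∈ G := fun n => by rw [hFG n]; exact proj_mem G _
  have claim : ∀ n, F - (FG n + FH n) = (T ^ (n + 1)) F := by
    intro n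
    induction n with
    | zero =>
      have h1 : (T ^ 1) F = proj Gᗮ (proj Hᗮ F) := by rw [pow_one]; rfl
      rw [h1, proj_orthogonal G, proj_orthogonal H, hFG 0, hFH0]
      abel
    | succ n ih =>
      have hTn : (T ^ (n + 2)) F = proj Gᗮ (proj Hᗮ ((T ^ (n + 1)) F)) := by
        rw [pow_succ']; rfl
      rw [hTn, ← ih, proj_orthogonal G, proj_orthogonal H]
      set en := F - (FG n + FH n) with hen
      have hH' : proj H (F - FG n) = proj H en + FH n := by
        have h0 : F - FG n = en + FH n := by rw [hen]; abel
        rw [h0, map_add, proj_of_mem H (hFHmem n)]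
      have hFH1 : FH (n + 1) = proj H en + FH n := by rw [hFH n, hH']
      have hG' : proj G (F - FH (n + 1)) = proj G (en - proj H en) + FG n := by
        have h0 : F - FH (n + 1) = (en - proj H en) + FG n := by
          rw [hFH1, hen]; abel
        rw [h0, map_add, proj_of_mem G (hFGmem n)]
      rw [hFG (n + 1), hG', hFH1, hen]
      abel
  have hmain : Tendsto (fun n => (T ^ (n + 1)) F) atTop (nhds (proj (Gᗮ ⊓ Hᗮ) F)) :=
    vonNeumann_T Gᗮ Hᗮ F
  have hlimeq : proj (Gᗮ ⊓ Hᗮ) F = F - proj (G ⊔ H) F := by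
    rw [proj_congr (Submodule.inf_orthogonal G H) F, proj_orthogonal (G ⊔ H) F]
  have hrw : ∀ n, proj (G ⊔ H) F - (FG n + FH n) = (T ^ (n + 1)) F - proj (Gᗮ ⊓ Hᗮ) F := by
    intro n
    rw [hlimeq, ← claim n]
    abel
  simp only [hrw]
  have := (hmain.sub_const (proj (Gᗮ ⊓ Hᗮ) F)).norm
  simpa using this
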